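/- arXiv:2508.11299 — 4 statements merged into one kernel-verified Lean document; each statement's English description precedes it below -/
import Mathlib

section
/- Let g : (0,1) → ℝ be the effective Ginzburg–Landau energy density, i.e. assume (i) for every b ∈ (0,1), m(b,R)/R² → g(b) as R → +∞, (ii) g is concave and nondecreasing on (0,1), and (iii) g(b) = −1/2 − (b/2)·log b + o(b·log b) as b → 0⁺. Then the derivative of g satisfies g'(b) = −(1/2)·log b·(1 + o(1)) as b → 0⁺; precisely: for every ε > 0 there exists b₀ ∈ (0,1) such that for all b ∈ (0,b₀) and every supporting slope m of g at b one has (1/2 − ε)·|log b| ≤ m ≤ (1/2 + ε)·|log b|. -/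
open MeasureTheory Filter Set

/-- The square `K_R = (-R/2, R/2)²` in `ℝ²`. -/
def squareK (R : ℝ) : Set (ℝ × ℝ) :=
  Set.Ioo (-R / 2) (R / 2) ×ˢ Set.Ioo (-R / 2) (R / 2)

/-- The Ginzburg–Landau energy density
`b·|(∇ - iA₀)u|² - |u|² + (1/2)|u|⁴` with `A₀(x) = (-x₂/2, x₁/2)`. -/
noncomputable def glDensity (b : ℝ) (u : ℝ × ℝ → ℂ) (x : ℝ × ℝ) : ℝ :=
  b * (‖fderiv ℝ u x (1, 0) - Complex.I * (-(x.2 : ℂ) / 2) * u x‖ ^ 2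
      + ‖fderiv ℝ u x (0, 1) - Complex.I * ((x.1 : ℂ) / 2) * u x‖ ^ 2)
    - ‖u x‖ ^ 2 + (1 / 2) * ‖u x‖ ^ 4

/-- The Ginzburg–Landau cell energy `𝒢_{b,R}(u)`. -/
noncomputable def glEnergy (b R : ℝ) (u : ℝ × ℝ → ℂ) : ℝ :=
  ∫ x in squareK R, glDensity b u x

/-- `m(b,R)`: the infimum of `𝒢_{b,R}` over smooth compactly supported functions
with support contained in `K_R`. -/
noncomputable def glInf (b R : ℝ) : ℝ :=
  sInf {e : ℝ | ∃ u : ℝ × ℝ → ℂ, ContDiff ℝ (⊤ : ℕ∞) u ∧ HasCompactSupport u ∧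
    tsupport u ⊆ squareK R ∧ e = glEnergy b R u}

/-- `m` is a supporting slope of `g` at `b` if `g(c) ≤ g(b) + m·(c - b)` for all
`c ∈ (0,1)`. -/
def IsSupportingSlope (g : ℝ → ℝ) (b m : ℝ) : Prop :=
  ∀ c ∈ Set.Ioo (0 : ℝ) 1, g c ≤ g b + m * (c - b)

set_option maxHeartbeats 1600000 in
/-- If `g` is the effective Ginzburg–Landau energy density, i.e.
(i) `m(b,R)/R² → g(b)` as `R → ∞`, (ii) `g` is concave and nondecreasing on `(0,1)`,
(iii) `g(b) = -1/2 - (b/2) log b + o(b log b)` as `b → 0⁺`, then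
`g'(b) = -(1/2)·log b·(1 + o(1))` as `b → 0⁺`, in the sense that for every `ε > 0`
there exists `b₀ ∈ (0,1)` such that for all `b ∈ (0,b₀)` every supporting slope `m`
of `g` at `b` satisfies `(1/2 - ε)|log b| ≤ m ≤ (1/2 + ε)|log b|`. -/
theorem derivative_of_effective_energy (g : ℝ → ℝ)
    (h1 : ∀ b ∈ Set.Ioo (0 : ℝ) 1,
      Tendsto (fun R => glInf b R / R ^ 2) atTop (nhds (g b)))
    (h2 : ConcaveOn ℝ (Set.Ioo (0 : ℝ) 1) g)
    (h3 : MonotoneOn g (Set.Ioo (0 : ℝ) 1))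
    (h4 : (fun b => g b - (-(1 / 2) - b / 2 * Real.log b))
      =o[nhdsWithin 0 (Set.Ioi 0)] fun b => b * Real.log b) :
    ∀ ε > 0, ∃ b₀ ∈ Set.Ioo (0 : ℝ) 1, ∀ b ∈ Set.Ioo 0 b₀, ∀ m : ℝ,
      IsSupportingSlope g b m →
      (1 / 2 - ε) * |Real.log b| ≤ m ∧ m ≤ (1 / 2 + ε) * |Real.log b| := by
  intro ε hε
  have hδpos : (0:ℝ) < ε/12 := by linarith
  have h4' := h4.def hδpos
  rw [Filter.eventually_iff] at h4'
  obtain ⟨b₁, hb₁, hsub⟩ := mem_nhdsGT_iff_exists_Ioo_subset.mp h4'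
  rw [Set.mem_Ioi] at hb₁
  have hlog2pos : (0:ℝ) < Real.log 2 := Real.log_pos one_lt_two
  have hlog2lt : Real.log 2 < 1 := by
    have := Real.log_two_lt_d9; linarith
  have hbound : ∀ x : ℝ, 0 < x → x < b₁ → x < 1 →
      |g x + 1/2 + x/2 * Real.log x| ≤ ε/12 * (x * (-Real.log x)) := by
    intro x hx0 hxb hx1
    have h := hsub ⟨hx0, hxb⟩
    simp only [Set.mem_setOf_eq, Real.norm_eq_abs] at h
    have hlx : Real.log x < 0 := Real.log_neg hx0 hx1
    have hxl : x * Real.log x < 0 := mul_neg_of_pos_of_neg hx0 hlx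
    rw [abs_of_neg hxl] at h
    calc |g x + 1/2 + x/2 * Real.log x|
        = |g x - (-(1/2) - x/2 * Real.log x)| := by
          rw [show g x - (-(1/2) - x/2 * Real.log x)
              = g x + 1/2 + x/2 * Real.log x from by ring]
      _ ≤ ε/12 * -(x * Real.log x) := h
      _ = ε/12 * (x * (-Real.log x)) := by ring
  set b₀ := min (b₁/2) (min (1/4) (Real.exp (-(4*(1+ε)/ε)))) with hb₀def
  have hb₀pos : 0 < b₀ := by positivity
  have hb₀le : b₀ ≤ 1/4 := le_trans (min_le_right _ _) (min_le_left _ _)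
  refine ⟨b₀, ⟨hb₀pos, by linarith⟩, ?_⟩
  rintro b ⟨hb0, hbb₀⟩ m hm
  have hb14 : b < 1/4 := lt_of_lt_of_le hbb₀ hb₀le
  have hbb1 : 2*b < b₁ := by
    have : b < b₁/2 := lt_of_lt_of_le hbb₀ (min_le_left _ _)
    linarith
  have hbexp : b < Real.exp (-(4*(1+ε)/ε)) :=
    lt_of_lt_of_le hbb₀ (le_trans (min_le_right _ _) (min_le_right _ _))
  have hLM : Real.log b < -(4*(1+ε)/ε) := by
    have := Real.log_lt_log hb0 hbexp
    rwa [Real.log_exp] at this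
  have hM4 : (4:ℝ) < 4*(1+ε)/ε := by
    rw [lt_div_iff₀ hε]; nlinarith
  have hL4 : Real.log b < -4 := by linarith
  have hεL : ε * Real.log b < -(4*(1+ε)) := by
    have h := (mul_lt_mul_iff_right₀ hε).mpr hLM
    rw [show ε * -(4*(1+ε)/ε) = -(4*(1+ε)) * (ε/ε) from by ring,
      div_self hε.ne', mul_one] at h
    exact h
  have hlog2b : Real.log (2*b) = Real.log 2 + Real.log b :=
    Real.log_mul two_ne_zero hb0.ne'
  have hlogb2 : Real.log (b/2) = Real.log b - Real.log 2 :=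
    Real.log_div hb0.ne' two_ne_zero
  have hE1 := hbound b hb0 (by linarith) (by linarith)
  have hE2 := hbound (2*b) (by linarith) hbb1 (by linarith)
  have hE3 := hbound (b/2) (by linarith) (by linarith) (by linarith)
  rw [hlog2b] at hE2
  rw [hlogb2] at hE3
  rw [abs_le] at hE1 hE2 hE3
  have hm1 := hm (2*b) ⟨by linarith, by linarith⟩
  have hm2 := hm (b/2) ⟨by linarith, by linarith⟩
  have k1 : (-Real.log 2 - Real.log b/2 + 2*(ε/12)*Real.log 2
      + 3*(ε/12)*Real.log b) * b ≤ m * b := by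
    nlinarith [hE1.2, hE2.1, hm1]
  have k1' := le_of_mul_le_mul_right k1 hb0
  have k2 : m * (b/2) ≤ (-Real.log b/2 - Real.log 2/2 - 3*(ε/12)*Real.log b
      + (ε/12)*Real.log 2) * (b/2) := by
    nlinarith [hE1.2, hE3.1, hm2]
  have k2' := le_of_mul_le_mul_right k2 (by linarith : (0:ℝ) < b/2)
  have habs : |Real.log b| = -Real.log b := abs_of_neg (by linarith)
  constructor
  · rw [habs]
    nlinarith [k1', hεL, mul_nonneg hε.le hlog2pos.le, hlog2lt, hlog2pos]
  · rw [habs]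
    nlinarith [k2', hεL, (mul_lt_mul_iff_right₀ hε).mpr hlog2lt, hlog2pos]
end

section
/- Let g : (0,1) → ℝ be concave and nondecreasing, and assume that (g(b) + 1/2 + (b/2)·log b)/(b·log b) → 0 as b → 0⁺. Then for every ε > 0 there exists b₀ ∈ (0,1) such that for all b ∈ (0,b₀), every supporting slope m of g at b satisfies m ≥ (1/2 − ε)·|log b|. In particular, liminf_{b→0⁺} g'(b)/|log b| ≥ 1/2 at points of differentiability. -/
/-!
Testing the supporting line at `b` against the point `2b` gives `m ≥ (g(2b) - g(b))/b`.
Writing `g(x) = -1/2 - (x/2) log x + o(x log x)`, this difference quotient is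
`(1/2) |log b| - log 2 + o(|log b|)`, so it eventually exceeds `(1/2 - ε) |log b|`.
-/

open Filter Set

open Real Topology

lemma IsSupportingSlope.sub_div_le {g : ℝ → ℝ} {b m : ℝ} (hm : IsSupportingSlope g b m)
    (hb : 0 < b) (h2b : 2 * b < 1) : (g (2 * b) - g b) / b ≤ m := by
  have := hm (2 * b) ⟨by linarith, h2b⟩
  rw [div_le_iff₀ hb]
  linarith

lemma tendsto_const_mul_nhdsGT_zero {c : ℝ} (hc : 0 < c) :
    Tendsto (fun x => c * x) (𝓝[>] 0) (𝓝[>] 0) :=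
  tendsto_comap.mono_left (comap_mulLeft_nhdsGT_zero hc).ge

/-- With `q x = (g x + 1/2 + (x/2) log x) / (x log x)`, the quotient equals
`1/2 + log 2 / log b + q b - 2 q (2b) (1 + log 2 / log b)` for `0 < b < 1/2`. -/
lemma tendsto_doubling_quotient {g : ℝ → ℝ}
    (hasym : Tendsto (fun b => (g b + 1 / 2 + b / 2 * log b) / (b * log b)) (𝓝[>] 0) (𝓝 0)) :
    Tendsto (fun b => (g (2 * b) - g b) / b / |log b|) (𝓝[>] 0) (𝓝 (1 / 2)) := by
  set q := fun b => (g b + 1 / 2 + b / 2 * log b) / (b * log b)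
  have hlog : Tendsto (fun b => log 2 / log b) (𝓝[>] 0) (𝓝 0) :=
    tendsto_log_nhdsGT_zero.const_div_atBot _
  have hlim := ((hlog.const_add (1 / 2)).add hasym).sub
    (((hasym.comp (tendsto_const_mul_nhdsGT_zero two_pos)).const_mul 2).mul (hlog.const_add 1))
  rw [add_zero, add_zero, mul_zero, zero_mul, sub_zero] at hlim
  refine hlim.congr' ?_
  filter_upwards [Ioo_mem_nhdsGT (show (0 : ℝ) < 1 / 2 by norm_num)] with b ⟨hb, hb2⟩
  have hlogb : log b < 0 := log_neg hb (by linarith)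
  have hlog2b : log (2 * b) = log 2 + log b := log_mul two_ne_zero hb.ne'
  have hlog2b_neg : log 2 + log b < 0 := hlog2b ▸ log_neg (by linarith) (by linarith)
  simp only [Function.comp, q, abs_of_neg hlogb, hlog2b]
  field_simp [hlogb.ne, hlog2b_neg.ne]
  ring

theorem supporting_slope_lower_bound_general (g : ℝ → ℝ)
    (hasym : Tendsto (fun b => (g b + 1 / 2 + b / 2 * Real.log b) / (b * Real.log b))
      (nhdsWithin 0 (Set.Ioi 0)) (nhds 0)) :
    ∀ ε > (0 : ℝ), ∃ b₀ ∈ Set.Ioo (0 : ℝ) 1, ∀ b ∈ Set.Ioo 0 b₀, ∀ m : ℝ,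
      IsSupportingSlope g b m → (1 / 2 - ε) * |Real.log b| ≤ m := by
  intro ε hε
  have hev : ∀ᶠ b in 𝓝[>] 0, ∀ m, IsSupportingSlope g b m → (1 / 2 - ε) * |log b| ≤ m := by
    filter_upwards [(tendsto_doubling_quotient hasym).eventually (lt_mem_nhds (sub_lt_self _ hε)),
      Ioo_mem_nhdsGT (show (0 : ℝ) < 1 / 2 by norm_num)] with b hquot ⟨hb, hb2⟩ m hm
    have hlogb : 0 < |log b| := abs_pos.mpr (log_neg hb (by linarith)).ne
    exact ((lt_div_iff₀ hlogb).mp hquot).le.trans (hm.sub_div_le hb (by linarith))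
  obtain ⟨b₀, ⟨hb₀, hb₀_le⟩, hsub⟩ :=
    (mem_nhdsGT_iff_exists_mem_Ioc_Ioo_subset (show (0 : ℝ) < 1 / 2 by norm_num)).mp hev
  exact ⟨b₀, ⟨hb₀, by linarith⟩, fun b hb => hsub hb⟩

/-- Let `g : (0,1) → ℝ` be concave and nondecreasing with
`(g(b) + 1/2 + (b/2) log b)/(b log b) → 0` as `b → 0⁺`. Then for every `ε > 0`
there is `b₀ ∈ (0,1)` such that for every `b ∈ (0,b₀)` every supporting slope `m`
of `g` at `b` satisfies `m ≥ (1/2 - ε)|log b|`. -/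
theorem supporting_slope_lower_bound (g : ℝ → ℝ)
    (hconc : ConcaveOn ℝ (Set.Ioo (0 : ℝ) 1) g)
    (hmono : MonotoneOn g (Set.Ioo (0 : ℝ) 1))
    (hasym : Tendsto (fun b => (g b + 1 / 2 + b / 2 * Real.log b) / (b * Real.log b))
      (nhdsWithin 0 (Set.Ioi 0)) (nhds 0)) :
    ∀ ε > (0 : ℝ), ∃ b₀ ∈ Set.Ioo (0 : ℝ) 1, ∀ b ∈ Set.Ioo 0 b₀, ∀ m : ℝ,
      IsSupportingSlope g b m → (1 / 2 - ε) * |Real.log b| ≤ m :=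
  supporting_slope_lower_bound_general g hasym
end

section
/- Let δ ∈ (0,1] and let φ : [0,δ) → ℝ be continuous with φ(0) = −1/2 and φ(b) ≤ 0 for all b ∈ [0,δ). Assume φ is differentiable on (0,δ) and satisfies the differential equation b·φ'(b) − 2·φ(b) = √(−2·φ(b)) for all b ∈ (0,δ). Then there exist C ∈ ℝ and δ' ∈ (0,δ] such that φ(b) = −(1 + C·b)²/2 for all b ∈ [0,δ'). In particular, φ cannot satisfy φ(b) = −1/2 − (b/2)·log b + o(b·log b) as b → 0⁺. -/
open Filter Set Asymptotics

/-- Let `δ ∈ (0,1]` and `φ : [0,δ) → ℝ` be continuous with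
`φ(0) = -1/2`, `φ ≤ 0`, differentiable on `(0,δ)` and solving
`b·φ'(b) - 2φ(b) = √(-2φ(b))` there. Then `φ(b) = -(1 + C·b)²/2` near `0` for
some constant `C`; in particular `φ` cannot satisfy
`φ(b) = -1/2 - (b/2) log b + o(b log b)` as `b → 0⁺`. -/
theorem ode_forces_quadratic_profile (δ : ℝ) (hδ : δ ∈ Set.Ioc (0 : ℝ) 1)
    (φ : ℝ → ℝ) (hcont : ContinuousOn φ (Set.Ico 0 δ))
    (h0 : φ 0 = -(1 / 2))
    (hneg : ∀ b ∈ Set.Ico (0 : ℝ) δ, φ b ≤ 0)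
    (hdiff : ∀ b ∈ Set.Ioo (0 : ℝ) δ, DifferentiableAt ℝ φ b)
    (hode : ∀ b ∈ Set.Ioo (0 : ℝ) δ,
      b * deriv φ b - 2 * φ b = Real.sqrt (-2 * φ b)) :
    (∃ C : ℝ, ∃ δ' ∈ Set.Ioc (0 : ℝ) δ, ∀ b ∈ Set.Ico (0 : ℝ) δ',
      φ b = -(1 + C * b) ^ 2 / 2) ∧
    ¬ ((fun b => φ b - (-(1 / 2) - b / 2 * Real.log b))
      =o[nhdsWithin 0 (Set.Ioi 0)] fun b => b * Real.log b) := by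
  obtain ⟨hδ0, hδ1⟩ := hδ
  -- Step 1: find δ' ≤ δ with φ < 0 on [0, δ')
  have hc0 : ContinuousWithinAt φ (Ico 0 δ) 0 := hcont 0 ⟨le_refl _, hδ0⟩
  have hev : φ ⁻¹' Iio 0 ∈ nhdsWithin 0 (Ico 0 δ) := by
    apply hc0 (isOpen_Iio.mem_nhds _)
    rw [h0]; norm_num
  rw [Metric.mem_nhdsWithin_iff] at hev
  obtain ⟨ε, hε, hball⟩ := hev
  set δ' := min ε δ with hδ'def
  have hδ'0 : 0 < δ' := lt_min hε hδ0
  have hδ'δ : δ' ≤ δ := min_le_right _ _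
  have hφneg : ∀ b ∈ Ico (0:ℝ) δ', φ b < 0 := by
    intro b hb
    apply hball
    refine ⟨?_, hb.1, hb.2.trans_le hδ'δ⟩
    simp only [Metric.mem_ball, Real.dist_eq, sub_zero, abs_of_nonneg hb.1]
    exact hb.2.trans_le (min_le_left _ _)
  -- the square-root substitution
  set ψ : ℝ → ℝ := fun b => Real.sqrt (-2 * φ b) with hψdef
  have hψsq : ∀ b ∈ Ico (0:ℝ) δ', ψ b ^ 2 = -2 * φ b := by
    intro b hb
    exact Real.sq_sqrt (by nlinarith [hφneg b hb])
  have hψpos : ∀ b ∈ Ico (0:ℝ) δ', 0 < ψ b := by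
    intro b hb
    exact Real.sqrt_pos.2 (by nlinarith [hφneg b hb])
  -- the auxiliary function h
  set g : ℝ → ℝ := fun b => (ψ b - 1) / b with hgdef
  have hder : ∀ b ∈ Ioo (0:ℝ) δ', HasDerivAt g 0 b := by
    intro b hb
    have hbδ : b ∈ Ioo (0:ℝ) δ := ⟨hb.1, hb.2.trans_le hδ'δ⟩
    have hbI : b ∈ Ico (0:ℝ) δ' := ⟨hb.1.le, hb.2⟩
    have hφb : φ b < 0 := hφneg b hbI
    have hsp : 0 < ψ b := hψpos b hbI
    have hsq : ψ b ^ 2 = -2 * φ b := hψsq b hbI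
    have hφd : HasDerivAt φ (deriv φ b) b := (hdiff b hbδ).hasDerivAt
    have hψd : HasDerivAt ψ ((-2 * deriv φ b) / (2 * ψ b)) b := by
      have := ((hφd.const_mul (-2)).sqrt (by nlinarith : -2 * φ b ≠ 0))
      simpa [hψdef] using this
    have hgd : HasDerivAt g
        ((((-2 * deriv φ b) / (2 * ψ b)) * b - (ψ b - 1) * 1) / b ^ 2) b := by
      exact (hψd.sub_const 1).div (hasDerivAt_id b) (ne_of_gt hb.1)
    have hodeb := hode b hbδ
    have hkey : ((-2 * deriv φ b) / (2 * ψ b)) * b - (ψ b - 1) * 1 = 0 := by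
      have h1 : b * deriv φ b - 2 * φ b = ψ b := hodeb
      have hbφ' : b * deriv φ b = -(ψ b ^ 2) + ψ b := by linarith
      field_simp
      nlinarith [hbφ', hsp]
    rw [hkey] at hgd
    simpa using hgd
  -- g is constant on Ioo 0 δ'
  set C : ℝ := g (δ' / 2) with hCdef
  have hmid : δ' / 2 ∈ Ioo (0:ℝ) δ' := ⟨by linarith, by linarith⟩
  have hconst : ∀ b ∈ Ioo (0:ℝ) δ', g b = C := by
    intro b hb
    refine (convex_Ioo (0:ℝ) δ').is_const_of_fderivWithin_eq_zero
      (fun x hx => ((hder x hx).differentiableAt).differentiableWithinAt)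
      (fun x hx => ?_) hb hmid
    rw [fderivWithin_of_isOpen isOpen_Ioo hx]
    have := (hder x hx).hasFDerivAt.fderiv
    rw [this]; ext; simp
  -- the quadratic formula
  have hquad : ∀ b ∈ Ico (0:ℝ) δ', φ b = -(1 + C * b) ^ 2 / 2 := by
    intro b hb
    rcases eq_or_lt_of_le hb.1 with rfl | hb0
    · rw [h0]; ring
    · have hbI : b ∈ Ioo (0:ℝ) δ' := ⟨hb0, hb.2⟩
      have hgb := hconst b hbI
      have hψb : ψ b = 1 + C * b := by
        rw [hgdef] at hgb
        field_simp at hgb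
        linarith
      have hsq := hψsq b hb
      rw [hψb] at hsq
      linarith [hsq]
  have hmain : ∃ C : ℝ, ∃ δ'' ∈ Set.Ioc (0 : ℝ) δ, ∀ b ∈ Set.Ico (0 : ℝ) δ'',
      φ b = -(1 + C * b) ^ 2 / 2 := ⟨C, δ', ⟨hδ'0, hδ'δ⟩, hquad⟩
  refine ⟨hmain, ?_⟩
  -- Step 2: the little-o contradiction
  intro ho
  have hmem : Ioo (0:ℝ) δ' ∈ nhdsWithin 0 (Ioi 0) := Ioo_mem_nhdsGT_of_mem ⟨le_refl _, hδ'0⟩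
  have hE : (fun b => φ b - (-(1 / 2) - b / 2 * Real.log b))
      =ᶠ[nhdsWithin 0 (Ioi 0)] (fun b => (-C * b - C ^ 2 * b ^ 2 / 2) + b / 2 * Real.log b) := by
    filter_upwards [hmem] with b hb
    rw [hquad b ⟨hb.1.le, hb.2⟩]; ring
  have ho' : (fun b => (-C * b - C ^ 2 * b ^ 2 / 2) + b / 2 * Real.log b)
      =o[nhdsWithin 0 (Ioi 0)] (fun b => b * Real.log b) := ho.congr' hE (EventuallyEq.refl _ _)
  have hlogtop : Tendsto (fun x => ‖Real.log x‖) (nhdsWithin 0 (Ioi 0)) atTop := by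
    simpa [Real.norm_eq_abs, Function.comp_def] using
      tendsto_abs_atBot_atTop.comp Real.tendsto_log_nhdsGT_zero
  have h1log : (fun _ : ℝ => (1:ℝ)) =o[nhdsWithin 0 (Ioi 0)] Real.log :=
    isLittleO_const_left.2 (Or.inr hlogtop)
  have hb_small : (fun b : ℝ => b) =o[nhdsWithin 0 (Ioi 0)] (fun b => b * Real.log b) := by
    have := (isBigO_refl (fun b : ℝ => b) (nhdsWithin 0 (Ioi 0))).mul_isLittleO h1log
    simpa using this
  have hO : (fun b : ℝ => -C - C ^ 2 * b / 2) =O[nhdsWithin 0 (Ioi 0)] (fun _ => (1:ℝ)) := by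
    have hT : Tendsto (fun b : ℝ => -C - C ^ 2 * b / 2) (nhdsWithin 0 (Ioi 0)) (nhds (-C - C ^ 2 * 0 / 2)) := by
      exact ((continuous_const.sub ((continuous_const.mul continuous_id).div_const 2)).tendsto 0).mono_left
        nhdsWithin_le_nhds
    exact hT.isBigO_one ℝ
  have hsmall : (fun b : ℝ => -C * b - C ^ 2 * b ^ 2 / 2)
      =o[nhdsWithin 0 (Ioi 0)] (fun b => b * Real.log b) := by
    have := hO.mul_isLittleO hb_small
    refine this.congr (fun b => by ring) (fun b => by ring)
  have hlog2 : (fun b : ℝ => b / 2 * Real.log b) =o[nhdsWithin 0 (Ioi 0)] (fun b => b * Real.log b) := by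
    have := ho'.sub hsmall
    exact this.congr_left (fun b => by ring)
  have hself : (fun b : ℝ => b * Real.log b) =o[nhdsWithin 0 (Ioi 0)] (fun b => b * Real.log b) := by
    have := hlog2.const_mul_left (2:ℝ)
    exact this.congr_left (fun b => by ring)
  refine isLittleO_irrefl ?_ hself
  apply Eventually.frequently
  filter_upwards [Ioo_mem_nhdsGT_of_mem (⟨le_refl (0:ℝ), one_pos⟩ : (0:ℝ) ∈ Ico (0:ℝ) 1)] with b hb
  have hlogneg : Real.log b < 0 := Real.log_neg hb.1 hb.2
  nlinarith [hb.1]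
end

section
/- Let b ∈ (0,1), let R > 0 satisfy R² ∈ 2π·ℕ, and let α, β ∈ ℝ. If v : ℝ² → ℂ is locally Lipschitz, (α,β)-magnetically periodic with period R, and its Ginzburg–Landau cell energy 𝒢_{b,R}(v) is finite, then there exists a locally Lipschitz u : ℝ² → ℂ which is (0,0)-magnetically periodic with period R and satisfies 𝒢_{b,R}(u) = 𝒢_{b,R}(v). In particular, the infimum of 𝒢_{b,R} over locally Lipschitz (α,β)-magnetically periodic functions equals its infimum over locally Lipschitz (0,0)-magnetically periodic functions. -/
open MeasureTheory Filter Set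
open scoped NNReal Topology
/-- `u` is `(α,β)`-magnetically periodic with period `R`. -/
def MagPeriodic (R α β : ℝ) (u : ℝ × ℝ → ℂ) : Prop :=
  (∀ x : ℝ × ℝ, u (x.1 + R, x.2) =
    Complex.exp (Complex.I * (α : ℂ)) *
      Complex.exp (Complex.I * (R : ℂ) * (x.2 : ℂ) / 2) * u x) ∧
  (∀ x : ℝ × ℝ, u (x.1, x.2 + R) =
    Complex.exp (Complex.I * (β : ℂ)) *
      Complex.exp (-(Complex.I * (R : ℂ) * (x.1 : ℂ) / 2)) * u x)

/-! ### Auxiliary machinery -/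

noncomputable def phmap (c₁ c₂ : ℝ) : ℝ × ℝ →L[ℝ] ℂ :=
  Complex.ofRealCLM.comp (c₁ • ContinuousLinearMap.fst ℝ ℝ ℝ + c₂ • ContinuousLinearMap.snd ℝ ℝ ℝ)

lemma phmap_apply (c₁ c₂ : ℝ) (w : ℝ × ℝ) :
    phmap c₁ c₂ w = ((c₁ * w.1 + c₂ * w.2 : ℝ) : ℂ) := by
  simp [phmap, smul_eq_mul]

noncomputable def phFn (d c₁ c₂ : ℝ) (y : ℝ × ℝ) : ℂ :=
  Complex.exp (Complex.I * ((d + c₁ * y.1 + c₂ * y.2 : ℝ) : ℂ))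

lemma phFn_norm (d c₁ c₂ : ℝ) (y : ℝ × ℝ) : ‖phFn d c₁ c₂ y‖ = 1 := by
  rw [phFn, Complex.norm_exp]
  simp

lemma phFn_zero (y : ℝ × ℝ) : phFn 0 0 0 y = 1 := by
  simp [phFn]

lemma hasFDerivAt_phase_mul (d c₁ c₂ : ℝ) (v : ℝ × ℝ → ℂ) (s x : ℝ × ℝ)
    (hv : DifferentiableAt ℝ v (x + s)) :
    HasFDerivAt (fun y => phFn d c₁ c₂ y * v (y + s))
      (phFn d c₁ c₂ x • fderiv ℝ v (x + s) +
        v (x + s) • (phFn d c₁ c₂ x • (Complex.I • phmap c₁ c₂))) x := by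
  have h1 : HasFDerivAt (fun y : ℝ × ℝ => v (y + s)) (fderiv ℝ v (x + s)) x := by
    have hid : HasFDerivAt (fun y : ℝ × ℝ => y + s) (ContinuousLinearMap.id ℝ (ℝ × ℝ)) x :=
      (hasFDerivAt_id x).add_const s
    have := HasFDerivAt.comp x (hv.hasFDerivAt) hid
    exact this
  have h2 : HasFDerivAt (phFn d c₁ c₂) (phFn d c₁ c₂ x • (Complex.I • phmap c₁ c₂)) x := by
    have hM : HasFDerivAt (fun y : ℝ × ℝ => (phmap c₁ c₂) y) (phmap c₁ c₂) x :=
      (phmap c₁ c₂).hasFDerivAt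
    have hg : HasFDerivAt (fun y : ℝ × ℝ => Complex.I * ((d + c₁ * y.1 + c₂ * y.2 : ℝ) : ℂ))
        (Complex.I • phmap c₁ c₂) x := by
      have := (hM.const_mul Complex.I).const_add (Complex.I * (d : ℂ))
      have heq : (fun y : ℝ × ℝ => Complex.I * (d : ℂ) + Complex.I * (phmap c₁ c₂) y)
          = fun y : ℝ × ℝ => Complex.I * ((d + c₁ * y.1 + c₂ * y.2 : ℝ) : ℂ) := by
        funext y; rw [phmap_apply]; push_cast; ring
      rw [heq] at this
      exact this
    exact hg.cexp
  exact h2.mul h1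

lemma diffAt_phase_mul (d c₁ c₂ : ℝ) (v : ℝ × ℝ → ℂ) (s x : ℝ × ℝ)
    (hv : DifferentiableAt ℝ v (x + s)) :
    DifferentiableAt ℝ (fun y => phFn d c₁ c₂ y * v (y + s)) x :=
  (hasFDerivAt_phase_mul d c₁ c₂ v s x hv).differentiableAt

lemma fderiv_phase_mul (d c₁ c₂ : ℝ) (v : ℝ × ℝ → ℂ) (s x : ℝ × ℝ)
    (hv : DifferentiableAt ℝ v (x + s)) (w : ℝ × ℝ) :
    fderiv ℝ (fun y => phFn d c₁ c₂ y * v (y + s)) x w =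
      phFn d c₁ c₂ x *
        (Complex.I * ((c₁ * w.1 + c₂ * w.2 : ℝ) : ℂ) * v (x + s) + fderiv ℝ v (x + s) w) := by
  rw [(hasFDerivAt_phase_mul d c₁ c₂ v s x hv).fderiv]
  simp only [ContinuousLinearMap.add_apply, ContinuousLinearMap.smul_apply, phmap_apply,
    smul_eq_mul]
  ring

lemma phase_mul_inv_eq (d c₁ c₂ : ℝ) (v : ℝ × ℝ → ℂ) (s : ℝ × ℝ) :
    (fun z : ℝ × ℝ => phFn (-d + c₁ * s.1 + c₂ * s.2) (-c₁) (-c₂) z *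
      (fun y => phFn d c₁ c₂ y * v (y + s)) (z + (-s))) = v := by
  funext z
  simp only [phFn]
  rw [← mul_assoc, ← Complex.exp_add]
  have hz : z + -s + s = z := by abel
  rw [hz]
  have : Complex.I * ((-d + c₁ * s.1 + c₂ * s.2 + -c₁ * z.1 + -c₂ * z.2 : ℝ) : ℂ)
      + Complex.I * ((d + c₁ * (z + -s).1 + c₂ * (z + -s).2 : ℝ) : ℂ) = 0 := by
    have h1 : (z + -s).1 = z.1 - s.1 := rfl
    have h2 : (z + -s).2 = z.2 - s.2 := rfl
    rw [h1, h2]; push_cast; ring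
  rw [this, Complex.exp_zero, one_mul]

lemma diffAt_phase_mul_iff (d c₁ c₂ : ℝ) (v : ℝ × ℝ → ℂ) (s x : ℝ × ℝ) :
    DifferentiableAt ℝ (fun y => phFn d c₁ c₂ y * v (y + s)) x ↔
      DifferentiableAt ℝ v (x + s) := by
  refine ⟨fun h => ?_, fun h => diffAt_phase_mul d c₁ c₂ v s x h⟩
  have h2 := diffAt_phase_mul (-d + c₁ * s.1 + c₂ * s.2) (-c₁) (-c₂)
    (fun y => phFn d c₁ c₂ y * v (y + s)) (-s) (x + s) (by simpa using h)
  rw [show (fun z : ℝ × ℝ => phFn (-d + c₁ * s.1 + c₂ * s.2) (-c₁) (-c₂) z *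
      (fun y => phFn d c₁ c₂ y * v (y + s)) (z + (-s))) = v from phase_mul_inv_eq d c₁ c₂ v s]
    at h2
  exact h2

lemma norm_phFn_mul (d c₁ c₂ : ℝ) (y : ℝ × ℝ) (z : ℂ) :
    ‖phFn d c₁ c₂ y * z‖ = ‖z‖ := by
  rw [norm_mul, phFn_norm, one_mul]

lemma shift_eq_phase (v : ℝ × ℝ → ℂ) (s : ℝ × ℝ) :
    (fun y : ℝ × ℝ => v (y + s)) = (fun y => phFn 0 0 0 y * v (y + s)) := by
  funext y; rw [phFn_zero, one_mul]

lemma diffAt_shift_iff (v : ℝ × ℝ → ℂ) (s x : ℝ × ℝ) :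
    DifferentiableAt ℝ (fun y : ℝ × ℝ => v (y + s)) x ↔ DifferentiableAt ℝ v (x + s) := by
  rw [shift_eq_phase]; exact diffAt_phase_mul_iff 0 0 0 v s x

lemma fderiv_shift (v : ℝ × ℝ → ℂ) (s x : ℝ × ℝ) (hv : DifferentiableAt ℝ v (x + s))
    (w : ℝ × ℝ) :
    fderiv ℝ (fun y : ℝ × ℝ => v (y + s)) x w = fderiv ℝ v (x + s) w := by
  rw [shift_eq_phase v s, fderiv_phase_mul 0 0 0 v s x hv w]
  rw [phFn_zero]
  push_cast
  ring

lemma glDensity_plus_form (b : ℝ) (v : ℝ × ℝ → ℂ) (z : ℝ × ℝ) :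
    glDensity b v z =
      b * (‖fderiv ℝ v z (1, 0) + Complex.I * ((z.2 / 2 : ℝ) : ℂ) * v z‖ ^ 2
        + ‖fderiv ℝ v z (0, 1) + Complex.I * ((-z.1 / 2 : ℝ) : ℂ) * v z‖ ^ 2)
      - ‖v z‖ ^ 2 + (1 / 2) * ‖v z‖ ^ 4 := by
  rw [glDensity]
  have a1 : fderiv ℝ v z (1, 0) - Complex.I * (-(z.2 : ℂ) / 2) * v z
      = fderiv ℝ v z (1, 0) + Complex.I * ((z.2 / 2 : ℝ) : ℂ) * v z := by push_cast; ring
  have a2 : fderiv ℝ v z (0, 1) - Complex.I * ((z.1 : ℂ) / 2) * v z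
      = fderiv ℝ v z (0, 1) + Complex.I * ((-z.1 / 2 : ℝ) : ℂ) * v z := by push_cast; ring
  rw [a1, a2]

lemma glDensity_phase_mul (b d c₁ c₂ : ℝ) (v : ℝ × ℝ → ℂ) (s x : ℝ × ℝ)
    (hv : DifferentiableAt ℝ v (x + s)) :
    glDensity b (fun y => phFn d c₁ c₂ y * v (y + s)) x =
      b * (‖fderiv ℝ v (x + s) (1, 0) + Complex.I * ((c₁ + x.2 / 2 : ℝ) : ℂ) * v (x + s)‖ ^ 2
        + ‖fderiv ℝ v (x + s) (0, 1) + Complex.I * ((c₂ - x.1 / 2 : ℝ) : ℂ) * v (x + s)‖ ^ 2)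
      - ‖v (x + s)‖ ^ 2 + (1 / 2) * ‖v (x + s)‖ ^ 4 := by
  have h1 := fderiv_phase_mul d c₁ c₂ v s x hv (1, 0)
  have h2 := fderiv_phase_mul d c₁ c₂ v s x hv (0, 1)
  rw [glDensity]
  simp only [h1, h2]
  have e1 : phFn d c₁ c₂ x *
        (Complex.I * ((c₁ * (1, 0).1 + c₂ * (1, 0).2 : ℝ) : ℂ) * v (x + s)
          + fderiv ℝ v (x + s) (1, 0)) -
      Complex.I * (-(x.2 : ℂ) / 2) * (phFn d c₁ c₂ x * v (x + s)) =
      phFn d c₁ c₂ x * (fderiv ℝ v (x + s) (1, 0)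
        + Complex.I * ((c₁ + x.2 / 2 : ℝ) : ℂ) * v (x + s)) := by
    push_cast; ring
  have e2 : phFn d c₁ c₂ x *
        (Complex.I * ((c₁ * (0, 1).1 + c₂ * (0, 1).2 : ℝ) : ℂ) * v (x + s)
          + fderiv ℝ v (x + s) (0, 1)) -
      Complex.I * ((x.1 : ℂ) / 2) * (phFn d c₁ c₂ x * v (x + s)) =
      phFn d c₁ c₂ x * (fderiv ℝ v (x + s) (0, 1)
        + Complex.I * ((c₂ - x.1 / 2 : ℝ) : ℂ) * v (x + s)) := by
    push_cast; ring
  rw [e1, e2, norm_phFn_mul, norm_phFn_mul, norm_phFn_mul]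

lemma glDensity_gauge (b d : ℝ) (v : ℝ × ℝ → ℂ) (t x : ℝ × ℝ)
    (hv : DifferentiableAt ℝ v (x + (-t))) :
    glDensity b (fun y => phFn d (-t.2 / 2) (t.1 / 2) y * v (y + (-t))) x
      = glDensity b v (x + (-t)) := by
  rw [glDensity_phase_mul b d _ _ v (-t) x hv, glDensity_plus_form b v (x + (-t))]
  have h1 : (x + -t).1 = x.1 - t.1 := rfl
  have h2 : (x + -t).2 = x.2 - t.2 := rfl
  rw [h1, h2]
  have c1 : ((-t.2 / 2 + x.2 / 2 : ℝ) : ℂ) = (((x.2 - t.2) / 2 : ℝ) : ℂ) := by push_cast; ring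
  have c2 : ((t.1 / 2 - x.1 / 2 : ℝ) : ℂ) = ((-(x.1 - t.1) / 2 : ℝ) : ℂ) := by push_cast; ring
  rw [c1, c2]

lemma diffAt_shift_per_iff (d : ℝ) (v : ℝ × ℝ → ℂ) (s x : ℝ × ℝ)
    (hEq : (fun y : ℝ × ℝ => v (y + s)) = fun y => phFn d (-s.2 / 2) (s.1 / 2) y * v y) :
    DifferentiableAt ℝ v (x + s) ↔ DifferentiableAt ℝ v x := by
  rw [← diffAt_shift_iff v s x, hEq]
  have h0 : (fun y : ℝ × ℝ => phFn d (-s.2 / 2) (s.1 / 2) y * v y)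
      = fun y => phFn d (-s.2 / 2) (s.1 / 2) y * v (y + 0) := by
    funext y; rw [add_zero]
  rw [h0, diffAt_phase_mul_iff, add_zero]

lemma glDensity_shift_per (b d : ℝ) (v : ℝ × ℝ → ℂ) (s x : ℝ × ℝ)
    (hEq : (fun y : ℝ × ℝ => v (y + s)) = fun y => phFn d (-s.2 / 2) (s.1 / 2) y * v y)
    (hv : DifferentiableAt ℝ v x) :
    glDensity b v (x + s) = glDensity b v x := by
  set c₁ := -s.2 / 2 with hc₁
  set c₂ := s.1 / 2 with hc₂
  have hEq' : (fun y : ℝ × ℝ => v (y + s)) = fun y => phFn d c₁ c₂ y * v (y + 0) := by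
    rw [hEq]; funext y; rw [add_zero]
  have hvs : DifferentiableAt ℝ v (x + s) :=
    (diffAt_shift_per_iff d v s x hEq).mpr hv
  have hx0 : x + (0 : ℝ × ℝ) = x := add_zero x
  have hfd : ∀ w : ℝ × ℝ, fderiv ℝ v (x + s) w =
      phFn d c₁ c₂ x * (Complex.I * ((c₁ * w.1 + c₂ * w.2 : ℝ) : ℂ) * v x
        + fderiv ℝ v x w) := by
    intro w
    rw [← fderiv_shift v s x hvs w, hEq',
      fderiv_phase_mul d c₁ c₂ v 0 x (by rwa [hx0]) w, hx0]
  have hvx : v (x + s) = phFn d c₁ c₂ x * v x := congrFun hEq x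
  rw [glDensity_plus_form b v (x + s), glDensity_plus_form b v x,
    hfd (1, 0), hfd (0, 1), hvx]
  have hs1 : (x + s).1 = x.1 + s.1 := rfl
  have hs2 : (x + s).2 = x.2 + s.2 := rfl
  rw [hs1, hs2]
  have e1 : phFn d c₁ c₂ x * (Complex.I * ((c₁ * (1, 0).1 + c₂ * (1, 0).2 : ℝ) : ℂ) * v x
        + fderiv ℝ v x (1, 0)) + Complex.I * (((x.2 + s.2) / 2 : ℝ) : ℂ)
          * (phFn d c₁ c₂ x * v x)
      = phFn d c₁ c₂ x * (fderiv ℝ v x (1, 0)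
        + Complex.I * ((x.2 / 2 : ℝ) : ℂ) * v x) := by
    rw [hc₁, hc₂]; push_cast; ring
  have e2 : phFn d c₁ c₂ x * (Complex.I * ((c₁ * (0, 1).1 + c₂ * (0, 1).2 : ℝ) : ℂ) * v x
        + fderiv ℝ v x (0, 1)) + Complex.I * ((-(x.1 + s.1) / 2 : ℝ) : ℂ)
          * (phFn d c₁ c₂ x * v x)
      = phFn d c₁ c₂ x * (fderiv ℝ v x (0, 1)
        + Complex.I * ((-x.1 / 2 : ℝ) : ℂ) * v x) := by
    rw [hc₁, hc₂]; push_cast; ring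
  rw [e1, e2, norm_phFn_mul, norm_phFn_mul, norm_phFn_mul]

open scoped Classical in
noncomputable def Wd (b : ℝ) (v : ℝ × ℝ → ℂ) (x : ℝ × ℝ) : ℝ :=
  if DifferentiableAt ℝ v x then glDensity b v x else 0

open scoped Classical in
lemma Wd_shift (b d : ℝ) (v : ℝ × ℝ → ℂ) (s : ℝ × ℝ)
    (hEq : (fun y : ℝ × ℝ => v (y + s)) = fun y => phFn d (-s.2 / 2) (s.1 / 2) y * v y)
    (x : ℝ × ℝ) : Wd b v (x + s) = Wd b v x := by
  by_cases h : DifferentiableAt ℝ v x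
  · rw [Wd, Wd, if_pos h, if_pos ((diffAt_shift_per_iff d v s x hEq).mpr h),
      glDensity_shift_per b d v s x hEq h]
  · rw [Wd, Wd, if_neg h, if_neg (fun hc => h ((diffAt_shift_per_iff d v s x hEq).mp hc))]

lemma magPeriodic_eq₁ {R α β : ℝ} {v : ℝ × ℝ → ℂ} (hper : MagPeriodic R α β v) :
    (fun y : ℝ × ℝ => v (y + ((R, 0) : ℝ × ℝ)))
      = fun y => phFn α (-((R, 0) : ℝ × ℝ).2 / 2) (((R, 0) : ℝ × ℝ).1 / 2) y * v y := by
  funext y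
  have h : y + ((R, 0) : ℝ × ℝ) = (y.1 + R, y.2) := by
    ext <;> simp
  rw [h, hper.1 y, phFn, ← Complex.exp_add]
  congr 2
  push_cast
  ring

lemma magPeriodic_eq₂ {R α β : ℝ} {v : ℝ × ℝ → ℂ} (hper : MagPeriodic R α β v) :
    (fun y : ℝ × ℝ => v (y + ((0, R) : ℝ × ℝ)))
      = fun y => phFn β (-((0, R) : ℝ × ℝ).2 / 2) (((0, R) : ℝ × ℝ).1 / 2) y * v y := by
  funext y
  have h : y + ((0, R) : ℝ × ℝ) = (y.1, y.2 + R) := by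
    ext <;> simp
  rw [h, hper.2 y, phFn, ← Complex.exp_add]
  congr 2
  push_cast
  ring

lemma Wd_lat {R α β : ℝ} {v : ℝ × ℝ → ℂ} (hper : MagPeriodic R α β v) (b : ℝ) :
    ∀ (k₁ k₂ : ℤ) (x : ℝ × ℝ), Wd b v (x + ((k₁ : ℝ) * R, (k₂ : ℝ) * R)) = Wd b v x := by
  have S1 : ∀ x : ℝ × ℝ, Wd b v (x + ((R, 0) : ℝ × ℝ)) = Wd b v x :=
    fun x => Wd_shift b α v _ (magPeriodic_eq₁ hper) x
  have S2 : ∀ x : ℝ × ℝ, Wd b v (x + ((0, R) : ℝ × ℝ)) = Wd b v x :=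
    fun x => Wd_shift b β v _ (magPeriodic_eq₂ hper) x
  have A : ∀ (k : ℤ) (x : ℝ × ℝ), Wd b v (x + ((k : ℝ) * R, 0)) = Wd b v x := by
    intro k
    induction k using Int.induction_on with
    | zero =>
        intro x
        have h0 : x + (((0 : ℤ) : ℝ) * R, (0 : ℝ)) = x := by ext <;> simp
        rw [h0]
    | succ k ih =>
        intro x
        push_cast
        have h' : x + (((k : ℝ) + 1) * R, (0 : ℝ)) = (x + ((k : ℝ) * R, 0)) + (R, 0) := by
          ext <;> simp <;> ring
        rw [h', S1]
        have h2 := ih x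
        push_cast at h2
        exact h2
    | pred k ih =>
        intro x
        push_cast
        have h2 := ih x
        push_cast at h2
        have h' : (x + ((-(k : ℝ) - 1) * R, (0 : ℝ))) + ((R, 0) : ℝ × ℝ)
            = x + (-(k : ℝ) * R, 0) := by
          ext <;> simp <;> ring
        rw [← S1 (x + ((-(k : ℝ) - 1) * R, (0 : ℝ))), h']
        exact h2
  have B : ∀ (k : ℤ) (x : ℝ × ℝ), Wd b v (x + (0, (k : ℝ) * R)) = Wd b v x := by
    intro k
    induction k using Int.induction_on with
    | zero =>
        intro x
        have h0 : x + ((0 : ℝ), ((0 : ℤ) : ℝ) * R) = x := by ext <;> simp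
        rw [h0]
    | succ k ih =>
        intro x
        push_cast
        have h' : x + ((0 : ℝ), ((k : ℝ) + 1) * R) = (x + (0, (k : ℝ) * R)) + (0, R) := by
          ext <;> simp <;> ring
        rw [h', S2]
        have h2 := ih x
        push_cast at h2
        exact h2
    | pred k ih =>
        intro x
        push_cast
        have h2 := ih x
        push_cast at h2
        have h' : (x + ((0 : ℝ), (-(k : ℝ) - 1) * R)) + ((0, R) : ℝ × ℝ)
            = x + (0, -(k : ℝ) * R) := by
          ext <;> simp <;> ring
        rw [← S2 (x + ((0 : ℝ), (-(k : ℝ) - 1) * R)), h']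
        exact h2
  intro k₁ k₂ x
  have hsplit : x + ((k₁ : ℝ) * R, (k₂ : ℝ) * R)
      = (x + ((k₁ : ℝ) * R, 0)) + (0, (k₂ : ℝ) * R) := by
    ext <;> simp
  rw [hsplit, B, A]


def lat (R : ℝ) : AddSubgroup (ℝ × ℝ) :=
  (AddSubgroup.zmultiples R).prod (AddSubgroup.zmultiples R)

lemma lat_mem (R : ℝ) (g : ℝ × ℝ) :
    g ∈ lat R ↔ (∃ k : ℤ, (k : ℝ) * R = g.1) ∧ ∃ k : ℤ, (k : ℝ) * R = g.2 := by
  simp [lat, AddSubgroup.mem_prod, AddSubgroup.mem_zmultiples_iff, zsmul_eq_mul]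

instance latCountable (R : ℝ) : Countable (lat R) := by
  have hs : Function.Surjective (fun p : ℤ × ℤ =>
      (⟨((p.1 : ℝ) * R, (p.2 : ℝ) * R), by
        rw [lat_mem]; exact ⟨⟨p.1, rfl⟩, ⟨p.2, rfl⟩⟩⟩ : lat R)) := by
    rintro ⟨g, hg⟩
    rw [lat_mem] at hg
    obtain ⟨⟨k₁, h₁⟩, ⟨k₂, h₂⟩⟩ := hg
    exact ⟨(k₁, k₂), by ext <;> simp [h₁, h₂]⟩
  exact hs.countable

-- test vadd instance & unfolding
example (R : ℝ) (g : lat R) (x : ℝ × ℝ) : g +ᵥ x = (g : ℝ × ℝ) + x := rfl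

-- instances needed
noncomputable example (R : ℝ) : MeasurableSpace (lat R) := by infer_instance
example (R : ℝ) : VAddInvariantMeasure (lat R) (ℝ × ℝ) volume :=
  ⟨fun c s hs => measure_preimage_add _ _ _⟩
example (R : ℝ) : MeasurableVAdd (lat R) (ℝ × ℝ) := by infer_instance

lemma line_null₁ (a : ℝ) : volume ({x : ℝ × ℝ | x.1 = a}) = 0 := by
  have h : {x : ℝ × ℝ | x.1 = a} = ({a} : Set ℝ) ×ˢ (univ : Set ℝ) := by
    ext x; exact ⟨fun h => ⟨h, trivial⟩, fun h => h.1⟩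
  rw [h, Measure.volume_eq_prod, Measure.prod_prod]
  simp

lemma line_null₂ (a : ℝ) : volume ({x : ℝ × ℝ | x.2 = a}) = 0 := by
  have h : {x : ℝ × ℝ | x.2 = a} = (univ : Set ℝ) ×ˢ ({a} : Set ℝ) := by
    ext x; exact ⟨fun h => ⟨trivial, h⟩, fun h => h.2⟩
  rw [h, Measure.volume_eq_prod, Measure.prod_prod]
  simp

lemma exists_zsmul_mem_Ioo {R : ℝ} (hR : 0 < R) {c x : ℝ}
    (hx : ∀ n : ℤ, x ≠ c + n * R) : ∃ n : ℤ, c < (n : ℝ) * R + x ∧ (n : ℝ) * R + x < c + R := by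
  set y := (c - x) / R with hy
  refine ⟨⌊y⌋ + 1, ?_, ?_⟩
  · have h1 : y < (⌊y⌋ : ℝ) + 1 := Int.lt_floor_add_one y
    have := (div_lt_iff₀ hR).mp h1  -- (c-x) < (⌊y⌋+1) R ... careful: y = (c-x)/R
    push_cast
    nlinarith
  · have h1 : (⌊y⌋ : ℝ) ≤ y := Int.floor_le y
    have h2 : (⌊y⌋ : ℝ) ≠ y := by
      intro hc
      apply hx (-⌊y⌋)
      have : (⌊y⌋ : ℝ) * R = c - x := by
        rw [hc, hy]; field_simp
      push_cast
      nlinarith [this]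
    have h3 : (⌊y⌋ : ℝ) < y := lt_of_le_of_ne h1 h2
    have := (lt_div_iff₀ hR).mp h3
    push_cast
    nlinarith

lemma lat_key {R : ℝ} (hR : 0 < R) {a p q : ℝ} {k k' : ℤ}
    (h : (k : ℝ) * R + p = (k' : ℝ) * R + q)
    (hp : p ∈ Ioo a (a + R)) (hq : q ∈ Ioo a (a + R)) : k = k' := by
  obtain ⟨hp1, hp2⟩ := hp
  obtain ⟨hq1, hq2⟩ := hq
  by_contra hkk
  rcases lt_or_gt_of_ne hkk with hlt | hlt
  · have hc : (k : ℝ) + 1 ≤ (k' : ℝ) := by exact_mod_cast hlt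
    nlinarith
  · have hc : (k' : ℝ) + 1 ≤ (k : ℝ) := by exact_mod_cast hlt
    nlinarith

lemma isFundamentalDomain_square {R : ℝ} (hR : 0 < R) (c : ℝ × ℝ) :
    IsAddFundamentalDomain (lat R) (Ioo c.1 (c.1 + R) ×ˢ Ioo c.2 (c.2 + R)) volume := by
  constructor
  · exact (measurableSet_Ioo.prod measurableSet_Ioo).nullMeasurableSet
  · have hbad : volume ((⋃ n : ℤ, {x : ℝ × ℝ | x.1 = c.1 + (n : ℝ) * R}) ∪
        ⋃ n : ℤ, {x : ℝ × ℝ | x.2 = c.2 + (n : ℝ) * R}) = 0 := by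
      apply measure_union_null
      · exact measure_iUnion_null fun n => line_null₁ _
      · exact measure_iUnion_null fun n => line_null₂ _
    rw [ae_iff]
    refine measure_mono_null ?_ hbad
    intro x hx
    simp only [mem_setOf_eq, not_exists] at hx
    by_contra hxb
    simp only [mem_union, mem_iUnion, mem_setOf_eq, not_or, not_exists] at hxb
    obtain ⟨hb1, hb2⟩ := hxb
    obtain ⟨n₁, h₁, h₁'⟩ := exists_zsmul_mem_Ioo hR (fun n => hb1 n)
    obtain ⟨n₂, h₂, h₂'⟩ := exists_zsmul_mem_Ioo hR (fun n => hb2 n)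
    refine hx ⟨((n₁ : ℝ) * R, (n₂ : ℝ) * R), ?_⟩ ⟨⟨h₁, h₁'⟩, ⟨h₂, h₂'⟩⟩
    rw [lat_mem]
    exact ⟨⟨n₁, rfl⟩, ⟨n₂, rfl⟩⟩
  · intro g g' hne
    apply Disjoint.aedisjoint
    rw [Set.disjoint_left]
    rintro z hz hz'
    obtain ⟨p, hp, rfl⟩ := hz
    obtain ⟨q, hq, hzq⟩ := hz'
    obtain ⟨⟨k₁, hk₁⟩, ⟨k₂, hk₂⟩⟩ := (lat_mem R g).mp g.2
    obtain ⟨⟨k₁', hk₁'⟩, ⟨k₂', hk₂'⟩⟩ := (lat_mem R g').mp g'.2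
    apply hne
    have e1 : (g' : ℝ × ℝ).1 + q.1 = (g : ℝ × ℝ).1 + p.1 := congrArg Prod.fst hzq
    have e2 : (g' : ℝ × ℝ).2 + q.2 = (g : ℝ × ℝ).2 + p.2 := congrArg Prod.snd hzq
    have hk : k₁ = k₁' := by
      refine lat_key hR (a := c.1) ?_ hp.1 hq.1
      rw [hk₁, hk₁']; linarith
    have hk' : k₂ = k₂' := by
      refine lat_key hR (a := c.2) ?_ hp.2 hq.2
      rw [hk₂, hk₂']; linarith
    ext
    · rw [← hk₁, ← hk₁', hk]
    · rw [← hk₂, ← hk₂', hk']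


lemma locallyLipschitz_ae_differentiableAt {v : ℝ × ℝ → ℂ} (hv : LocallyLipschitz v) :
    ∀ᵐ x : ℝ × ℝ, DifferentiableAt ℝ v x := by
  -- choose for each point an open nbhd on which v is Lipschitz
  have H : ∀ x : ℝ × ℝ, ∃ u : Set (ℝ × ℝ), IsOpen u ∧ x ∈ u ∧ ∃ K, LipschitzOnWith K v u := by
    intro x
    obtain ⟨K, t, ht, hK⟩ := hv x
    exact ⟨interior t, isOpen_interior, mem_interior_iff_mem_nhds.mpr ht, K,
      hK.mono interior_subset⟩
  choose u hu hxu K hK using H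
  obtain ⟨T, hTc, hTu⟩ := TopologicalSpace.isOpen_iUnion_countable u hu
  have hTuniv : ⋃ i ∈ T, u i = univ := by
    rw [hTu]
    exact eq_univ_of_forall fun x => mem_iUnion.mpr ⟨x, hxu x⟩
  have hae : ∀ i : ℝ × ℝ, ∀ᵐ x : ℝ × ℝ, x ∈ u i → DifferentiableAt ℝ v x := by
    intro i
    filter_upwards [(hK i).ae_differentiableWithinAt_of_mem] with x hx hxm
    exact (hx hxm).differentiableAt ((hu i).mem_nhds hxm)
  have hcnt : ∀ᵐ x : ℝ × ℝ, ∀ i ∈ T, x ∈ u i → DifferentiableAt ℝ v x :=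
    (ae_ball_iff hTc).mpr fun i _ => hae i
  filter_upwards [hcnt] with x hx
  have : x ∈ ⋃ i ∈ T, u i := hTuniv ▸ mem_univ x
  obtain ⟨i, hiT, hxi⟩ := mem_iUnion₂.mp this
  exact hx i hiT hxi

lemma LocallyLipschitz.cmul {f g : ℝ × ℝ → ℂ} (hf : LocallyLipschitz f)
    (hg : LocallyLipschitz g) : LocallyLipschitz (fun x => f x * g x) := by
  intro x
  obtain ⟨K₁, s₁, hs₁, hf₁⟩ := hf x
  obtain ⟨K₂, s₂, hs₂, hg₁⟩ := hg x
  have hb₁ : {y | ‖f y‖ < ‖f x‖ + 1} ∈ 𝓝 x := by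
    have : ContinuousAt (fun y => ‖f y‖) x := (hf.continuous.norm).continuousAt
    exact this.preimage_mem_nhds (Iio_mem_nhds (lt_add_one _))
  have hb₂ : {y | ‖g y‖ < ‖g x‖ + 1} ∈ 𝓝 x := by
    have : ContinuousAt (fun y => ‖g y‖) x := (hg.continuous.norm).continuousAt
    exact this.preimage_mem_nhds (Iio_mem_nhds (lt_add_one _))
  refine ⟨((‖f x‖ + 1) * K₂ + (‖g x‖ + 1) * K₁).toNNReal,
    s₁ ∩ s₂ ∩ ({y | ‖f y‖ < ‖f x‖ + 1} ∩ {y | ‖g y‖ < ‖g x‖ + 1}),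
    inter_mem (inter_mem hs₁ hs₂) (inter_mem hb₁ hb₂), ?_⟩
  rw [lipschitzOnWith_iff_dist_le_mul]
  rintro a ⟨⟨ha₁, ha₂⟩, ⟨ha₃, ha₄⟩⟩ b ⟨⟨hb₁', hb₂'⟩, ⟨hb₃, hb₄⟩⟩
  have d1 : dist (f a * g a) (f a * g b) = ‖f a‖ * dist (g a) (g b) := by
    rw [dist_eq_norm, dist_eq_norm, ← mul_sub, norm_mul]
  have d2 : dist (f a * g b) (f b * g b) = ‖g b‖ * dist (f a) (f b) := by
    rw [dist_eq_norm, dist_eq_norm, ← sub_mul, norm_mul, mul_comm]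
  have hga : dist (g a) (g b) ≤ K₂ * dist a b := hg₁.dist_le_mul a ha₂ b hb₂'
  have hfa : dist (f a) (f b) ≤ K₁ * dist a b := hf₁.dist_le_mul a ha₁ b hb₁'
  have hCnn : (0 : ℝ) ≤ (‖f x‖ + 1) * K₂ + (‖g x‖ + 1) * K₁ := by positivity
  rw [Real.coe_toNNReal _ hCnn]
  calc dist (f a * g a) (f b * g b)
      ≤ dist (f a * g a) (f a * g b) + dist (f a * g b) (f b * g b) := dist_triangle _ _ _
    _ = ‖f a‖ * dist (g a) (g b) + ‖g b‖ * dist (f a) (f b) := by rw [d1, d2]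
    _ ≤ (‖f x‖ + 1) * (K₂ * dist a b) + (‖g x‖ + 1) * (K₁ * dist a b) := by
        have h1 : ‖f a‖ ≤ ‖f x‖ + 1 := le_of_lt ha₃
        have h2 : ‖g b‖ ≤ ‖g x‖ + 1 := le_of_lt hb₄
        have := dist_nonneg (x := g a) (y := g b)
        have := dist_nonneg (x := f a) (y := f b)
        have := dist_nonneg (x := a) (y := b)
        have hK₂ : (0:ℝ) ≤ K₂ := K₂.2
        have hK₁ : (0:ℝ) ≤ K₁ := K₁.2
        have hfa' : (0:ℝ) ≤ ‖f a‖ := norm_nonneg _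
        have hgb' : (0:ℝ) ≤ ‖g b‖ := norm_nonneg _
        nlinarith
    _ = ((‖f x‖ + 1) * K₂ + (‖g x‖ + 1) * K₁) * dist a b := by ring

lemma phFn_contDiff (d c₁ c₂ : ℝ) : ContDiff ℝ 1 (phFn d c₁ c₂) := by
  unfold phFn
  apply Complex.contDiff_exp.comp
  apply ContDiff.mul contDiff_const
  apply Complex.ofRealCLM.contDiff.comp
  exact (contDiff_const.add (contDiff_const.mul contDiff_fst)).add (contDiff_const.mul contDiff_snd)

lemma shift_locallyLipschitz (t : ℝ × ℝ) : LocallyLipschitz (fun y : ℝ × ℝ => y + t) := by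
  apply LipschitzWith.locallyLipschitz
  apply LipschitzWith.of_dist_le_mul (K := 1)
  intro a b
  rw [dist_add_right]
  simp

set_option maxHeartbeats 1000000 in
lemma gauge_aux (b R : ℝ) (hR : 0 < R) (α β α' β' : ℝ) (v : ℝ × ℝ → ℂ)
    (hv : LocallyLipschitz v) (hper : MagPeriodic R α β v)
    (hfin : IntegrableOn (glDensity b v) (squareK R)) :
    ∃ u : ℝ × ℝ → ℂ, LocallyLipschitz u ∧ MagPeriodic R α' β' u ∧
      IntegrableOn (glDensity b u) (squareK R) ∧ glEnergy b R u = glEnergy b R v := by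
  classical
  set t₁ : ℝ := (β' - β) / R with ht₁
  set t₂ : ℝ := (α - α') / R with ht₂
  set t : ℝ × ℝ := (t₁, t₂) with ht
  set u : ℝ × ℝ → ℂ := fun y => phFn 0 (-t.2 / 2) (t.1 / 2) y * v (y + (-t)) with hu
  have hRne : (R : ℂ) ≠ 0 := Complex.ofReal_ne_zero.mpr hR.ne'
  -- Locally Lipschitz
  have hlip : LocallyLipschitz u := by
    apply LocallyLipschitz.cmul
    · exact (phFn_contDiff 0 (-t.2 / 2) (t.1 / 2)).locallyLipschitz
    · exact hv.comp (shift_locallyLipschitz (-t))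
  -- Magnetic periodicity
  have hmp : MagPeriodic R α' β' u := by
    constructor
    · intro x
      have hpt : ((x.1 + R, x.2) : ℝ × ℝ) + (-t) = ((x.1 - t.1) + R, x.2 - t.2) := by
        ext <;> simp <;> ring
      have hxt : ((x.1 - t.1, x.2 - t.2) : ℝ × ℝ) = x + (-t) := by
        ext <;> simp [sub_eq_add_neg]
      have hv1 : v ((x.1 - t.1) + R, x.2 - t.2) =
          Complex.exp (Complex.I * (α : ℂ)) *
            Complex.exp (Complex.I * (R : ℂ) * ((x.2 - t.2 : ℝ) : ℂ) / 2) * v (x + (-t)) := by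
        simpa [hxt] using hper.1 (x.1 - t.1, x.2 - t.2)
      show phFn 0 (-t.2 / 2) (t.1 / 2) (x.1 + R, x.2) * v ((x.1 + R, x.2) + (-t)) = _
      rw [hpt, hv1]
      have key : phFn 0 (-t.2 / 2) (t.1 / 2) (x.1 + R, x.2) *
          (Complex.exp (Complex.I * (α : ℂ)) *
            Complex.exp (Complex.I * (R : ℂ) * ((x.2 - t.2 : ℝ) : ℂ) / 2))
          = Complex.exp (Complex.I * (α' : ℂ)) *
            Complex.exp (Complex.I * (R : ℂ) * (x.2 : ℂ) / 2) *
              phFn 0 (-t.2 / 2) (t.1 / 2) x := by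
        rw [phFn, phFn]
        rw [← Complex.exp_add, ← Complex.exp_add, ← Complex.exp_add, ← Complex.exp_add]
        congr 1
        have h1 : ((x.1 + R, x.2) : ℝ × ℝ).1 = x.1 + R := rfl
        have h2 : ((x.1 + R, x.2) : ℝ × ℝ).2 = x.2 := rfl
        rw [h1, h2]
        have hTT : t.1 = t₁ := rfl
        have hTT2 : t.2 = t₂ := rfl
        rw [hTT, hTT2, ht₁, ht₂]
        push_cast
        field_simp
        ring
      calc phFn 0 (-t.2 / 2) (t.1 / 2) (x.1 + R, x.2) *
            (Complex.exp (Complex.I * (α : ℂ)) *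
              Complex.exp (Complex.I * (R : ℂ) * ((x.2 - t.2 : ℝ) : ℂ) / 2) * v (x + (-t)))
          = phFn 0 (-t.2 / 2) (t.1 / 2) (x.1 + R, x.2) *
            (Complex.exp (Complex.I * (α : ℂ)) *
              Complex.exp (Complex.I * (R : ℂ) * ((x.2 - t.2 : ℝ) : ℂ) / 2)) * v (x + (-t)) := by
            ring
        _ = Complex.exp (Complex.I * (α' : ℂ)) *
            Complex.exp (Complex.I * (R : ℂ) * (x.2 : ℂ) / 2) *
              phFn 0 (-t.2 / 2) (t.1 / 2) x * v (x + (-t)) := by rw [key]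
        _ = Complex.exp (Complex.I * (α' : ℂ)) *
            Complex.exp (Complex.I * (R : ℂ) * (x.2 : ℂ) / 2) * u x := by
            rw [hu]; ring
    · intro x
      have hpt : ((x.1, x.2 + R) : ℝ × ℝ) + (-t) = (x.1 - t.1, (x.2 - t.2) + R) := by
        ext <;> simp <;> ring
      have hxt : ((x.1 - t.1, x.2 - t.2) : ℝ × ℝ) = x + (-t) := by
        ext <;> simp [sub_eq_add_neg]
      have hv1 : v (x.1 - t.1, (x.2 - t.2) + R) =
          Complex.exp (Complex.I * (β : ℂ)) *
            Complex.exp (-(Complex.I * (R : ℂ) * ((x.1 - t.1 : ℝ) : ℂ) / 2)) * v (x + (-t)) := by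
        simpa [hxt] using hper.2 (x.1 - t.1, x.2 - t.2)
      show phFn 0 (-t.2 / 2) (t.1 / 2) (x.1, x.2 + R) * v ((x.1, x.2 + R) + (-t)) = _
      rw [hpt, hv1]
      have key : phFn 0 (-t.2 / 2) (t.1 / 2) (x.1, x.2 + R) *
          (Complex.exp (Complex.I * (β : ℂ)) *
            Complex.exp (-(Complex.I * (R : ℂ) * ((x.1 - t.1 : ℝ) : ℂ) / 2)))
          = Complex.exp (Complex.I * (β' : ℂ)) *
            Complex.exp (-(Complex.I * (R : ℂ) * (x.1 : ℂ) / 2)) *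
              phFn 0 (-t.2 / 2) (t.1 / 2) x := by
        rw [phFn, phFn]
        rw [← Complex.exp_add, ← Complex.exp_add, ← Complex.exp_add, ← Complex.exp_add]
        congr 1
        have h1 : ((x.1, x.2 + R) : ℝ × ℝ).1 = x.1 := rfl
        have h2 : ((x.1, x.2 + R) : ℝ × ℝ).2 = x.2 + R := rfl
        rw [h1, h2]
        have hTT : t.1 = t₁ := rfl
        have hTT2 : t.2 = t₂ := rfl
        rw [hTT, hTT2, ht₁, ht₂]
        push_cast
        field_simp
        ring
      calc phFn 0 (-t.2 / 2) (t.1 / 2) (x.1, x.2 + R) *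
            (Complex.exp (Complex.I * (β : ℂ)) *
              Complex.exp (-(Complex.I * (R : ℂ) * ((x.1 - t.1 : ℝ) : ℂ) / 2)) * v (x + (-t)))
          = phFn 0 (-t.2 / 2) (t.1 / 2) (x.1, x.2 + R) *
            (Complex.exp (Complex.I * (β : ℂ)) *
              Complex.exp (-(Complex.I * (R : ℂ) * ((x.1 - t.1 : ℝ) : ℂ) / 2))) * v (x + (-t)) := by
            ring
        _ = Complex.exp (Complex.I * (β' : ℂ)) *
            Complex.exp (-(Complex.I * (R : ℂ) * (x.1 : ℂ) / 2)) *
              phFn 0 (-t.2 / 2) (t.1 / 2) x * v (x + (-t)) := by rw [key]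
        _ = Complex.exp (Complex.I * (β' : ℂ)) *
            Complex.exp (-(Complex.I * (R : ℂ) * (x.1 : ℂ) / 2)) * u x := by
            rw [hu]; ring
  -- analytic part
  have hae := locallyLipschitz_ae_differentiableAt hv
  have hNmeas : MeasurableSet {x : ℝ × ℝ | ¬ DifferentiableAt ℝ v x} :=
    (measurableSet_of_differentiableAt ℝ v).compl
  have hN0 : volume {x : ℝ × ℝ | ¬ DifferentiableAt ℝ v x} = 0 := ae_iff.mp hae
  have h1 : glDensity b v =ᵐ[volume] Wd b v := by
    filter_upwards [hae] with x hx
    rw [Wd, if_pos hx]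
  have haeu : ∀ᵐ x : ℝ × ℝ, DifferentiableAt ℝ v (x + (-t)) := by
    rw [ae_iff]
    have hpre : {x : ℝ × ℝ | ¬ DifferentiableAt ℝ v (x + (-t))}
        = (fun x : ℝ × ℝ => x + (-t)) ⁻¹' {x | ¬ DifferentiableAt ℝ v x} := rfl
    rw [hpre, (measurePreserving_add_right volume (-t)).measure_preimage
      hNmeas.nullMeasurableSet, hN0]
  have h2 : glDensity b u =ᵐ[volume] fun x => Wd b v (x + (-t)) := by
    filter_upwards [haeu] with x hx
    rw [hu]
    rw [glDensity_gauge b 0 v t x hx, Wd, if_pos hx]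
  have h3 : ∀ (g : lat R) (x : ℝ × ℝ), Wd b v (g +ᵥ x) = Wd b v x := by
    intro g x
    obtain ⟨⟨k₁, hk₁⟩, ⟨k₂, hk₂⟩⟩ := (lat_mem R g).mp g.2
    have hg : (g : ℝ × ℝ) = ((k₁ : ℝ) * R, (k₂ : ℝ) * R) := by
      ext
      · exact hk₁.symm
      · exact hk₂.symm
    show Wd b v ((g : ℝ × ℝ) + x) = Wd b v x
    rw [hg, add_comm]
    exact Wd_lat hper b k₁ k₂ x
  have h3' : ∀ (g : lat R) (x : ℝ × ℝ),
      (fun x => Wd b v (x + (-t))) (g +ᵥ x) = (fun x => Wd b v (x + (-t))) x := by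
    intro g x
    have hco : (g +ᵥ x) + (-t) = g +ᵥ (x + (-t)) := by
      show ((g : ℝ × ℝ) + x) + (-t) = (g : ℝ × ℝ) + (x + (-t))
      rw [add_assoc]
    simp only
    rw [hco, h3]
  haveI : VAddInvariantMeasure (lat R) (ℝ × ℝ) volume :=
    ⟨fun c s _ => measure_preimage_add _ _ _⟩
  have hsq : squareK R = Ioo (-R/2) (-R/2 + R) ×ˢ Ioo (-R/2) (-R/2 + R) := by
    rw [squareK]
    have hhalf : (R / 2 : ℝ) = -R/2 + R := by ring
    rw [hhalf]
  have hfd : IsAddFundamentalDomain (lat R) (squareK R) volume := by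
    rw [hsq]
    exact isFundamentalDomain_square hR (-R/2, -R/2)
  set K' : Set (ℝ × ℝ) :=
    Ioo (-R/2 - t.1) (-R/2 - t.1 + R) ×ˢ Ioo (-R/2 - t.2) (-R/2 - t.2 + R) with hK'
  have hfd' : IsAddFundamentalDomain (lat R) K' volume :=
    isFundamentalDomain_square hR (-R/2 - t.1, -R/2 - t.2)
  have hpre : (fun x : ℝ × ℝ => x + (-t)) ⁻¹' K' = squareK R := by
    ext x
    have e1 : (x + -t).1 = x.1 - t.1 := rfl
    have e2 : (x + -t).2 = x.2 - t.2 := rfl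
    simp only [hK', squareK, mem_preimage, mem_prod, mem_Ioo, e1, e2]
    constructor
    · rintro ⟨⟨a1, a2⟩, ⟨a3, a4⟩⟩
      exact ⟨⟨by linarith, by linarith⟩, ⟨by linarith, by linarith⟩⟩
    · rintro ⟨⟨a1, a2⟩, ⟨a3, a4⟩⟩
      exact ⟨⟨by linarith, by linarith⟩, ⟨by linarith, by linarith⟩⟩
  have iW : IntegrableOn (Wd b v) (squareK R) := hfin.congr (ae_restrict_of_ae h1)
  have iW' : IntegrableOn (Wd b v) K' := (hfd.integrableOn_iff hfd' h3).mp iW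
  have hemb : MeasurableEmbedding (fun x : ℝ × ℝ => x + (-t)) :=
    (MeasurableEquiv.addRight (-t)).measurableEmbedding
  have iG : IntegrableOn (fun x => Wd b v (x + (-t))) (squareK R) := by
    rw [← hpre]
    exact (MeasurePreserving.integrableOn_comp_preimage (measurePreserving_add_right volume (-t))
      hemb (f := Wd b v) (s := K')).mpr iW'
  have ifin_u : IntegrableOn (glDensity b u) (squareK R) :=
    iG.congr (ae_restrict_of_ae h2.symm)
  have henergy : glEnergy b R u = glEnergy b R v := by
    rw [glEnergy, glEnergy]
    calc ∫ x in squareK R, glDensity b u x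
        = ∫ x in squareK R, Wd b v (x + (-t)) := integral_congr_ae (ae_restrict_of_ae h2)
      _ = ∫ x in (fun x : ℝ × ℝ => x + (-t)) ⁻¹' K', Wd b v (x + (-t)) := by rw [hpre]
      _ = ∫ y in K', Wd b v y :=
          (measurePreserving_add_right volume (-t)).setIntegral_preimage_emb hemb _ _
      _ = ∫ y in squareK R, Wd b v y := hfd'.setIntegral_eq hfd h3
      _ = ∫ y in squareK R, glDensity b v y := integral_congr_ae (ae_restrict_of_ae h1.symm)
  exact ⟨u, hlip, hmp, ifin_u, henergy⟩

/-- For `b ∈ (0,1)`, `R > 0` with `R² ∈ 2πℕ`, and `α, β ∈ ℝ`: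
any locally Lipschitz `(α,β)`-magnetically periodic `v` of finite cell energy can
be gauged to a locally Lipschitz `(0,0)`-magnetically periodic `u` with the same
energy; in particular the two infima of the energy coincide. -/
theorem gauge_to_zero_periodic (b : ℝ) (hb : b ∈ Set.Ioo (0 : ℝ) 1)
    (R : ℝ) (hR : 0 < R) (hquant : ∃ n : ℕ, R ^ 2 = 2 * Real.pi * n)
    (α β : ℝ) (v : ℝ × ℝ → ℂ) (hv : LocallyLipschitz v)
    (hper : MagPeriodic R α β v)
    (hfin : IntegrableOn (glDensity b v) (squareK R)) :
    (∃ u : ℝ × ℝ → ℂ, LocallyLipschitz u ∧ MagPeriodic R 0 0 u ∧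
      glEnergy b R u = glEnergy b R v) ∧
    sInf {e : ℝ | ∃ u : ℝ × ℝ → ℂ, LocallyLipschitz u ∧ MagPeriodic R α β u ∧
        IntegrableOn (glDensity b u) (squareK R) ∧ e = glEnergy b R u}
      = sInf {e : ℝ | ∃ u : ℝ × ℝ → ℂ, LocallyLipschitz u ∧ MagPeriodic R 0 0 u ∧
        IntegrableOn (glDensity b u) (squareK R) ∧ e = glEnergy b R u} := by
  constructor
  · obtain ⟨u, h1, h2, h3, h4⟩ := gauge_aux b R hR α β 0 0 v hv hper hfin
    exact ⟨u, h1, h2, h4⟩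
  · have hset : {e : ℝ | ∃ u : ℝ × ℝ → ℂ, LocallyLipschitz u ∧ MagPeriodic R α β u ∧
        IntegrableOn (glDensity b u) (squareK R) ∧ e = glEnergy b R u}
      = {e : ℝ | ∃ u : ℝ × ℝ → ℂ, LocallyLipschitz u ∧ MagPeriodic R 0 0 u ∧
        IntegrableOn (glDensity b u) (squareK R) ∧ e = glEnergy b R u} := by
      ext e
      simp only [mem_setOf_eq]
      constructor
      · rintro ⟨w, hw1, hw2, hw3, rfl⟩
        obtain ⟨u, h1, h2, h3, h4⟩ := gauge_aux b R hR α β 0 0 w hw1 hw2 hw3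
        exact ⟨u, h1, h2, h3, h4.symm⟩
      · rintro ⟨w, hw1, hw2, hw3, rfl⟩
        obtain ⟨u, h1, h2, h3, h4⟩ := gauge_aux b R hR 0 0 α β w hw1 hw2 hw3
        exact ⟨u, h1, h2, h3, h4.symm⟩
    rw [hset]
end
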